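/- Let V be a finite index set, 𝒳 = ∏_{i∈V} 𝒳_i a finite product space, and let P: 𝒳 → ℝ be a strictly positive probability distribution that factorizes over a set of scopes S: P(x) = (1/Z) ∏_{I∈S} φ_I(x_I) with strictly positive factors. Fix x* ∈ 𝒳 and define the canonical factors φ*_D(x) = exp(∑_{U⊆D} (−1)^{|D−U|} ln P(x_U, x*_{−U})). Let S* = (⋃_{D∈S} 𝒫(D)) ∖ {∅} be the collection of all nonempty subsets of the scopes. Then for every x ∈ 𝒳, P(x) = P(x*) · ∏_{D*∈S*} φ*_{D*}(x_{D*}). -/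

import Mathlib

open scoped BigOperators

/-- If `h` is insensitive to membership of some `j ∈ D`, its signed sum over the
powerset of `D` vanishes. -/
lemma mobius_vanish {V : Type*} [DecidableEq V] (D : Finset V) (j : V) (hj : j ∈ D)
    (h : Finset V → ℝ) (hh : ∀ U, h (U.erase j) = h U) :
    ∑ U ∈ D.powerset, (-1 : ℝ) ^ (D \ U).card * h U = 0 := by
  refine Finset.sum_involution
    (fun U _ => if j ∈ U then U.erase j else insert j U) ?_ ?_ ?_ ?_
  · intro U hU
    by_cases hjU : j ∈ U
    · simp only [if_pos hjU]
      have hd : D \ U.erase j = insert j (D \ U) := by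
        ext i
        simp only [Finset.mem_sdiff, Finset.mem_erase, Finset.mem_insert]
        constructor
        · rintro ⟨hiD, hi⟩
          by_cases hij : i = j
          · exact Or.inl hij
          · exact Or.inr ⟨hiD, fun hiU => hi ⟨hij, hiU⟩⟩
        · rintro (rfl | ⟨hiD, hiU⟩)
          · exact ⟨hj, fun hc => hc.1 rfl⟩
          · exact ⟨hiD, fun hc => hiU hc.2⟩
      have hjn : j ∉ D \ U := by simp [hjU]
      rw [hh U, hd, Finset.card_insert_of_notMem hjn, pow_succ]
      ring
    · simp only [if_neg hjU]
      have hd : D \ insert j U = (D \ U).erase j := by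
        ext i
        simp only [Finset.mem_sdiff, Finset.mem_erase, Finset.mem_insert]
        tauto
      have hjm : j ∈ D \ U := Finset.mem_sdiff.2 ⟨hj, hjU⟩
      have hcard : (D \ U).card = ((D \ U).erase j).card + 1 := by
        rw [Finset.card_erase_of_mem hjm]
        have := Finset.card_pos.2 ⟨j, hjm⟩
        omega
      have hval : h (insert j U) = h U := by
        have h1 := hh (insert j U)
        rw [Finset.erase_insert hjU] at h1
        exact h1.symm
      rw [hval, hd, hcard, pow_succ]
      ring
  · intro U hU _
    by_cases hjU : j ∈ U
    · simp only [if_pos hjU]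
      intro hc
      have h1 := Finset.notMem_erase j U
      rw [hc] at h1
      exact h1 hjU
    · simp only [if_neg hjU]
      intro hc
      have h1 := Finset.mem_insert_self j U
      rw [hc] at h1
      exact hjU h1
  · intro U hU
    by_cases hjU : j ∈ U
    · simp only [if_pos hjU, Finset.mem_powerset]
      exact (Finset.erase_subset _ _).trans (Finset.mem_powerset.1 hU)
    · simp only [if_neg hjU, Finset.mem_powerset]
      exact Finset.insert_subset hj (Finset.mem_powerset.1 hU)
  · intro U hU
    by_cases hjU : j ∈ U
    · simp [hjU, Finset.notMem_erase, Finset.insert_erase hjU]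
    · simp [hjU, Finset.erase_insert hjU]

lemma neg_one_pow_powerset_real {V : Type*} [DecidableEq V] (s : Finset V) :
    (∑ T ∈ s.powerset, (-1 : ℝ) ^ T.card) = if s = ∅ then 1 else 0 := by
  have h1 := Finset.sum_powerset_neg_one_pow_card (x := s)
  have h2 : ((∑ T ∈ s.powerset, (-1 : ℤ) ^ T.card : ℤ) : ℝ)
      = ∑ T ∈ s.powerset, (-1 : ℝ) ^ T.card := by push_cast; ring
  rw [← h2, h1]
  split <;> norm_num

/-- Möbius inversion over the powerset lattice. -/
lemma mobius_inversion {V : Type*} [DecidableEq V] (E : Finset V) (f : Finset V → ℝ) :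
    ∑ D ∈ E.powerset, ∑ U ∈ D.powerset, (-1 : ℝ) ^ (D \ U).card * f U = f E := by
  rw [Finset.sum_comm' (s := E.powerset) (t := fun D => D.powerset)
      (t' := E.powerset) (s' := fun U => E.powerset.filter (fun D => U ⊆ D))
      (f := fun D U => (-1 : ℝ) ^ (D \ U).card * f U)
      (by
        intro D U
        simp only [Finset.mem_powerset, Finset.mem_filter, Finset.mem_powerset]
        constructor
        · rintro ⟨h1, h2⟩
          exact ⟨⟨h1, h2⟩, h2.trans h1⟩
        · rintro ⟨⟨h1, h2⟩, h3⟩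
          exact ⟨h1, h2⟩)]
  have key : ∀ U ∈ E.powerset,
      (∑ D ∈ E.powerset.filter (fun D => U ⊆ D), (-1 : ℝ) ^ (D \ U).card * f U)
      = (if E \ U = ∅ then 1 else 0) * f U := by
    intro U hU
    have hUE : U ⊆ E := Finset.mem_powerset.1 hU
    rw [← Finset.sum_mul, ← neg_one_pow_powerset_real (E \ U)]
    congr 1
    refine Finset.sum_bij' (fun D _ => D \ U) (fun T _ => U ∪ T) ?_ ?_ ?_ ?_ ?_
    · intro D hD
      simp only [Finset.mem_filter, Finset.mem_powerset] at hD ⊢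
      exact Finset.sdiff_subset_sdiff hD.1 le_rfl
    · intro T hT
      simp only [Finset.mem_powerset] at hT
      simp only [Finset.mem_filter, Finset.mem_powerset]
      exact ⟨Finset.union_subset hUE (hT.trans Finset.sdiff_subset),
        Finset.subset_union_left⟩
    · intro D hD
      simp only [Finset.mem_filter, Finset.mem_powerset] at hD
      exact Finset.union_sdiff_of_subset hD.2
    · intro T hT
      simp only [Finset.mem_powerset] at hT
      have hdisj : Disjoint U T := Finset.disjoint_left.2 fun a haU haT =>
        (Finset.mem_sdiff.1 (hT haT)).2 haU
      exact Finset.union_sdiff_cancel_left hdisj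
    · intro D hD; rfl
  rw [Finset.sum_congr rfl key]
  rw [Finset.sum_eq_single_of_mem E (Finset.mem_powerset.2 le_rfl)]
  · simp
  · intro U hU hne
    have hns : E \ U ≠ ∅ := by
      intro hc
      apply hne
      have hUE : U ⊆ E := Finset.mem_powerset.1 hU
      have := Finset.sdiff_eq_empty_iff_subset.1 hc
      exact Finset.Subset.antisymm hUE this
    rw [if_neg hns, zero_mul]

theorem canonical_parametrisation
    {V : Type*} [Fintype V] [DecidableEq V]
    {𝒳 : V → Type*} [∀ i, Fintype (𝒳 i)]
    (P : (∀ i, 𝒳 i) → ℝ) (hP : ∀ x, 0 < P x)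
    (hprob : ∑ x : (∀ i, 𝒳 i), P x = 1)
    (S : Finset (Finset V)) (φ : Finset V → (∀ i, 𝒳 i) → ℝ) (Z : ℝ) (hZ : 0 < Z)
    (hφpos : ∀ I ∈ S, ∀ x, 0 < φ I x)
    (hφdep : ∀ I ∈ S, ∀ x y : (∀ i, 𝒳 i), (∀ i ∈ I, x i = y i) → φ I x = φ I y)
    (hfact : ∀ x, P x = (1 / Z) * ∏ I ∈ S, φ I x)
    (xstar : ∀ i, 𝒳 i) (x : ∀ i, 𝒳 i) :
    P x = P xstar *
      ∏ D ∈ (S.biUnion Finset.powerset).erase ∅,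
        Real.exp (∑ U ∈ D.powerset,
          (-1 : ℝ) ^ (D \ U).card
            * Real.log (P fun i => if i ∈ U then x i else xstar i)) := by
  classical
  let xU : Finset V → (∀ i, 𝒳 i) := fun U i => if i ∈ U then x i else xstar i
  let f : Finset V → ℝ := fun U => Real.log (P (xU U))
  let g : Finset V → ℝ := fun D => ∑ U ∈ D.powerset, (-1 : ℝ) ^ (D \ U).card * f U
  have hfdecomp : ∀ U : Finset V,
      f U = Real.log (1 / Z) + ∑ I ∈ S, Real.log (φ I (xU U)) := by
    intro U
    show Real.log (P (xU U)) = _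
    rw [hfact (xU U), Real.log_mul (by positivity)
      (ne_of_gt (Finset.prod_pos fun I hI => hφpos I hI _)),
      Real.log_prod (fun I hI => ne_of_gt (hφpos I hI _))]
  -- g vanishes outside S*
  have hvanish : ∀ D ∈ (Finset.univ : Finset V).powerset.erase ∅,
      D ∉ (S.biUnion Finset.powerset).erase ∅ → g D = 0 := by
    intro D hD hDn
    have hDne : D ≠ ∅ := (Finset.mem_erase.1 hD).1
    have hnot : ∀ I ∈ S, ¬ D ⊆ I := by
      intro I hI hsub
      exact hDn (Finset.mem_erase.2 ⟨hDne, Finset.mem_biUnion.2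
        ⟨I, hI, Finset.mem_powerset.2 hsub⟩⟩)
    obtain ⟨j0, hj0⟩ := Finset.nonempty_iff_ne_empty.2 hDne
    show ∑ U ∈ D.powerset, (-1 : ℝ) ^ (D \ U).card * f U = 0
    calc ∑ U ∈ D.powerset, (-1 : ℝ) ^ (D \ U).card * f U
        = (∑ U ∈ D.powerset, (-1 : ℝ) ^ (D \ U).card * Real.log (1 / Z))
          + ∑ I ∈ S, ∑ U ∈ D.powerset, (-1 : ℝ) ^ (D \ U).card
              * Real.log (φ I (xU U)) := by
          simp only [hfdecomp, mul_add, Finset.mul_sum]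
          rw [Finset.sum_add_distrib]
          congr 1
          exact Finset.sum_comm
      _ = 0 := by
          rw [mobius_vanish D j0 hj0 (fun _ => Real.log (1 / Z)) (fun _ => rfl)]
          rw [Finset.sum_eq_zero, add_zero]
          intro I hI
          obtain ⟨j, hjD, hjI⟩ := Finset.not_subset.1 (hnot I hI)
          refine mobius_vanish D j hjD (fun U => Real.log (φ I (xU U))) ?_
          intro U
          show Real.log (φ I (xU (U.erase j))) = Real.log (φ I (xU U))
          refine congrArg Real.log (hφdep I hI _ _ fun i hiI => ?_)
          have hij : i ≠ j := fun hc => hjI (hc ▸ hiI)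
          show (if i ∈ U.erase j then x i else xstar i)
              = (if i ∈ U then x i else xstar i)
          simp [Finset.mem_erase, hij]
  -- main computation
  have hsum : (∑ D ∈ (S.biUnion Finset.powerset).erase ∅, g D)
      = Real.log (P x) - Real.log (P xstar) := by
    have hsubset : (S.biUnion Finset.powerset).erase ∅
        ⊆ (Finset.univ : Finset V).powerset.erase ∅ := by
      intro D hD
      exact Finset.mem_erase.2 ⟨(Finset.mem_erase.1 hD).1,
        Finset.mem_powerset.2 (Finset.subset_univ D)⟩
    rw [Finset.sum_subset hsubset (fun D hD hDn => hvanish D hD hDn)]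
    have hadd := Finset.add_sum_erase _ g
      (Finset.mem_powerset.2 (Finset.empty_subset (Finset.univ : Finset V)))
    have hinv : ∑ D ∈ (Finset.univ : Finset V).powerset, g D = f Finset.univ :=
      mobius_inversion Finset.univ f
    have hgempty : g ∅ = f ∅ := by
      show ∑ U ∈ (∅ : Finset V).powerset, (-1 : ℝ) ^ ((∅ : Finset V) \ U).card * f U = f ∅
      simp
    have hxuniv : xU Finset.univ = x := by
      funext i
      simp [xU]
    have hxempty : xU ∅ = xstar := by
      funext i
      simp [xU]
    have hfuniv : f Finset.univ = Real.log (P x) := by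
      show Real.log (P (xU Finset.univ)) = _
      rw [hxuniv]
    have hfempty : f ∅ = Real.log (P xstar) := by
      show Real.log (P (xU ∅)) = _
      rw [hxempty]
    rw [hinv, hgempty, hfempty] at hadd
    rw [hfuniv] at hinv
    linarith
  rw [← Real.exp_sum]
  show P x = P xstar * Real.exp (∑ D ∈ (S.biUnion Finset.powerset).erase ∅, g D)
  rw [hsum, Real.exp_sub, Real.exp_log (hP x), Real.exp_log (hP xstar),
    mul_comm, div_mul_cancel₀ _ (ne_of_gt (hP xstar))]
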